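/- For every positive integer n and every real c > 0, 1/(n+2+c) ≤ E_{χ²_{n+2}}[1/(u+c)] ≤ 1/(n+c). -/

import Mathlib

open MeasureTheory ProbabilityTheory

open Real Set

open scoped ENNReal NNReal

/-- The chi-square distribution with `m` degrees of freedom: the Gamma distribution
with shape `m/2` and rate `1/2`. -/
noncomputable def chiSq (m : ℕ) : Measure ℝ := gammaMeasure ((m : ℝ) / 2) (1 / 2)

/-- Expectation of `f` under the chi-square distribution with `m` degrees of freedom. -/
noncomputable def chiSqExp (m : ℕ) (f : ℝ → ℝ) : ℝ := ∫ u, f u ∂(chiSq m)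

lemma chiSq_prob (m : ℕ) (hm : 1 ≤ m) : IsProbabilityMeasure (chiSq m) := by
  have h : (0:ℝ) < m := by exact_mod_cast hm
  exact isProbabilityMeasure_gammaMeasure (by positivity) (by norm_num)

lemma chiSq_ae_nonneg (m : ℕ) : ∀ᵐ u ∂chiSq m, 0 ≤ u := by
  rw [ae_iff]
  have h : {u : ℝ | ¬ 0 ≤ u} = Iio 0 := by ext u; simp only [mem_setOf_eq, not_le, mem_Iio]
  rw [h, chiSq, gammaMeasure, withDensity_apply _ measurableSet_Iio,
    lintegral_gammaPDF_of_nonpos le_rfl]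

lemma chiSq_add_two (m : ℕ) (hm : 1 ≤ m) :
    chiSq (m + 2) = (chiSq m).withDensity (fun u => ENNReal.ofReal (u / m)) := by
  have hm' : (0:ℝ) < m := by exact_mod_cast hm
  have hf : Measurable (gammaPDF ((m:ℝ)/2) (1/2)) := (measurable_gammaPDFReal _ _).ennreal_ofReal
  have hg : Measurable (fun u : ℝ => ENNReal.ofReal (u / m)) := by measurability
  rw [chiSq, chiSq, gammaMeasure, gammaMeasure, ← withDensity_mul _ hf hg]
  congr 1
  funext u
  rcases le_or_gt 0 u with hu | hu
  · rw [Pi.mul_apply, gammaPDF_of_nonneg hu, gammaPDF_of_nonneg hu, ← ENNReal.ofReal_mul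
      (by positivity)]
    congr 1
    rcases eq_or_lt_of_le hu with rfl | hu0
    · push_cast
      have h1 : ((m:ℝ)+2)/2 - 1 ≠ 0 := by
        have e : ((m:ℝ)+2)/2 - 1 = (m:ℝ)/2 := by ring
        rw [e]; positivity
      rw [Real.zero_rpow h1]
      simp
    · push_cast
      have e1 : ((m:ℝ)+2)/2 = (m:ℝ)/2 + 1 := by ring
      rw [e1, Real.rpow_add (by norm_num : (0:ℝ) < 1/2), Real.Gamma_add_one (by positivity),
        add_sub_cancel_right]
      have e2 : u ^ ((m:ℝ)/2) = u ^ ((m:ℝ)/2 - 1) * u := by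
        rw [← Real.rpow_add_one hu0.ne', sub_add_cancel]
      rw [e2]
      field_simp
      ring
  · rw [Pi.mul_apply, gammaPDF_of_neg hu, gammaPDF_of_neg hu, zero_mul]

lemma integral_chiSq_add_two (m : ℕ) (hm : 1 ≤ m) (g : ℝ → ℝ) :
    ∫ u, g u ∂chiSq (m + 2) = ∫ u, (u / m) * g u ∂chiSq m := by
  rw [chiSq_add_two m hm]
  have hmeas : Measurable (fun u : ℝ => Real.toNNReal (u / m)) :=
    (measurable_id.div_const _).real_toNNReal
  have he : (fun u : ℝ => ENNReal.ofReal (u / m)) =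
      (fun u : ℝ => ((Real.toNNReal (u / m) : ℝ≥0) : ℝ≥0∞)) := rfl
  rw [he, integral_withDensity_eq_integral_smul hmeas]
  refine integral_congr_ae ?_
  filter_upwards [chiSq_ae_nonneg m] with u hu
  have hm' : (0:ℝ) ≤ m := Nat.cast_nonneg m
  rw [NNReal.smul_def, smul_eq_mul, Real.coe_toNNReal _ (div_nonneg hu hm')]

lemma integrable_id_chiSq (m : ℕ) (hm : 1 ≤ m) : Integrable (fun u : ℝ => u) (chiSq m) := by
  have hP : IsProbabilityMeasure (chiSq (m + 2)) := chiSq_prob _ (by omega)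
  have hmeas : Measurable (fun u : ℝ => Real.toNNReal (u / m)) :=
    (measurable_id.div_const _).real_toNNReal
  have h1 : Integrable (fun _ : ℝ => (1:ℝ)) (chiSq (m + 2)) := integrable_const 1
  rw [chiSq_add_two m hm] at h1
  have he : (fun u : ℝ => ENNReal.ofReal (u / m)) =
      (fun u : ℝ => ((Real.toNNReal (u / m) : ℝ≥0) : ℝ≥0∞)) := rfl
  rw [he] at h1
  have h1' := (integrable_withDensity_iff_integrable_smul hmeas (g := fun _ : ℝ => (1:ℝ))).1 h1
  have h2 : Integrable (fun u : ℝ => u / m) (chiSq m) := by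
    refine h1'.congr ?_
    filter_upwards [chiSq_ae_nonneg m] with u hu
    rw [NNReal.smul_def, smul_eq_mul, Real.coe_toNNReal _ (div_nonneg hu (Nat.cast_nonneg m)),
      mul_one]
  have := h2.const_mul (m : ℝ)
  refine this.congr ?_
  have hm' : (0:ℝ) < m := by exact_mod_cast hm
  filter_upwards with u
  field_simp

lemma integral_id_chiSq (m : ℕ) (hm : 1 ≤ m) : ∫ u, u ∂chiSq m = m := by
  have hP : IsProbabilityMeasure (chiSq (m + 2)) := chiSq_prob _ (by omega)
  have h := integral_chiSq_add_two m hm (fun _ => 1)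
  simp only [mul_one] at h
  rw [integral_const] at h
  simp only [probReal_univ, one_smul] at h
  have hm' : (0:ℝ) < m := by exact_mod_cast hm
  have h2 : ∫ u, u / (m:ℝ) ∂chiSq m = (m:ℝ)⁻¹ * ∫ u, u ∂chiSq m := by
    simp_rw [div_eq_inv_mul]
    exact integral_const_mul _ _
  rw [h2] at h
  field_simp at h
  linarith

lemma integrable_invShift_chiSq (m : ℕ) (hm : 1 ≤ m) {c : ℝ} (hc : 0 < c) :
    Integrable (fun u : ℝ => (u + c)⁻¹) (chiSq m) := by
  have hP : IsProbabilityMeasure (chiSq m) := chiSq_prob _ hm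
  refine Integrable.mono' (integrable_const c⁻¹)
    ((measurable_id.add_const c).inv.aestronglyMeasurable) ?_
  filter_upwards [chiSq_ae_nonneg m] with u hu
  have h1 : 0 < u + c := by linarith
  rw [Real.norm_eq_abs, abs_of_nonneg (by positivity)]
  exact inv_anti₀ hc (by linarith)

lemma convexOn_invShift {c : ℝ} (hc : 0 < c) :
    ConvexOn ℝ (Set.Ici 0) (fun u : ℝ => (u + c)⁻¹) := by
  have h := (strictConvexOn_zpow (m := -1) (by decide) (by decide)).convexOn
  have A : ℝ →ᵃ[ℝ] ℝ := AffineMap.id ℝ ℝ + AffineMap.const ℝ ℝ c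
  have h2 := (h.comp_affineMap (AffineMap.id ℝ ℝ + AffineMap.const ℝ ℝ c))
  have h3 : ConvexOn ℝ (Set.Ici 0)
      ((fun x : ℝ => x ^ (-1 : ℤ)) ∘ (AffineMap.id ℝ ℝ + AffineMap.const ℝ ℝ c)) := by
    refine h2.subset ?_ (convex_Ici 0)
    intro u hu
    simp only [Set.mem_preimage, AffineMap.coe_add, AffineMap.coe_id, AffineMap.coe_const,
      Pi.add_apply, id_eq, Function.const_apply, Set.mem_Ioi]
    have : (0:ℝ) ≤ u := hu
    linarith
  convert h3 using 1
  funext u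
  simp [zpow_neg_one]

lemma jensen_chiSq (m : ℕ) (hm : 1 ≤ m) {c : ℝ} (hc : 0 < c) :
    ((m : ℝ) + c)⁻¹ ≤ ∫ u, (u + c)⁻¹ ∂chiSq m := by
  have hP : IsProbabilityMeasure (chiSq m) := chiSq_prob _ hm
  have h := (convexOn_invShift hc).map_integral_le (f := fun u : ℝ => u) (μ := chiSq m)
    (ContinuousOn.inv₀ (Continuous.continuousOn (by continuity)) ?_)
    isClosed_Ici ?_ (integrable_id_chiSq m hm) ?_
  · rwa [integral_id_chiSq m hm] at h
  · intro u hu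
    have : (0:ℝ) ≤ u := hu
    positivity
  · exact chiSq_ae_nonneg m
  · exact integrable_invShift_chiSq m hm hc

theorem stmt_2 (n : ℕ) (hn : 1 ≤ n) (c : ℝ) (hc : 0 < c) :
    1 / ((n : ℝ) + 2 + c) ≤ chiSqExp (n + 2) (fun u => 1 / (u + c)) ∧
    chiSqExp (n + 2) (fun u => 1 / (u + c)) ≤ 1 / ((n : ℝ) + c) := by
  have hPn : IsProbabilityMeasure (chiSq n) := chiSq_prob _ hn
  have hn' : (0:ℝ) < n := by exact_mod_cast hn
  have hexp : chiSqExp (n + 2) (fun u => 1 / (u + c)) = ∫ u, (u + c)⁻¹ ∂chiSq (n + 2) := by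
    simp only [chiSqExp, one_div]
  constructor
  · rw [hexp, one_div]
    have h := jensen_chiSq (n + 2) (by omega) hc
    have hcast : ((n + 2 : ℕ) : ℝ) = (n : ℝ) + 2 := by push_cast; ring
    rwa [hcast] at h
  · rw [hexp, one_div]
    rw [integral_chiSq_add_two n hn]
    have key : ∫ u, (u / n) * (u + c)⁻¹ ∂chiSq n
        = ∫ u, (n : ℝ)⁻¹ * (1 - c * (u + c)⁻¹) ∂chiSq n := by
      refine integral_congr_ae ?_
      filter_upwards [chiSq_ae_nonneg n] with u hu
      have h1 : u + c > 0 := by linarith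
      field_simp
      ring
    rw [key, integral_const_mul]
    have hint : ∫ u, (1 - c * (u + c)⁻¹) ∂chiSq n = 1 - c * ∫ u, (u + c)⁻¹ ∂chiSq n := by
      rw [integral_sub (integrable_const 1) ((integrable_invShift_chiSq n hn hc).const_mul c),
        integral_const, integral_const_mul]
      simp
    rw [hint]
    have hj := jensen_chiSq n hn hc
    have hnc : (0:ℝ) < (n:ℝ) + c := by linarith
    have h2 : 1 - c * (∫ u, (u + c)⁻¹ ∂chiSq n) ≤ 1 - c * ((n : ℝ) + c)⁻¹ := by nlinarith
    have h3 : (n:ℝ)⁻¹ * (1 - c * (∫ u, (u + c)⁻¹ ∂chiSq n))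
        ≤ (n:ℝ)⁻¹ * (1 - c * ((n : ℝ) + c)⁻¹) := by
      exact mul_le_mul_of_nonneg_left h2 (by positivity)
    have h4 : (n:ℝ)⁻¹ * (1 - c * ((n : ℝ) + c)⁻¹) = ((n : ℝ) + c)⁻¹ := by
      field_simp
      ring
    linarith
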